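/- Let H : ℝ^N → ℝ^N be continuous, Π : ℝ^N → ℝ differentiable, and Φ : ℝ → ℝ locally Lipschitz with ∇Π(f) · H(f) = Φ(Π(f)) for every f ∈ ℝ^N. If f¹, f² : [0, T] → ℝ^N are differentiable solutions of f' = H(f) with Π(f¹(0)) = Π(f²(0)), then Π(f¹(t)) = Π(f²(t)) for all t ∈ [0, T]; that is, the coarse response is uniquely determined by the coarse initial value even when the underlying fine initial conditions differ. -/

import Mathlib

open Set Filter Topology
open Set Filter Topology

lemma myLocallyLipschitz.exists_lipschitzOnWith_of_isCompact {Φ : ℝ → ℝ}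
    (hΦ : LocallyLipschitz Φ) {K : Set ℝ} (hK : IsCompact K) :
    ∃ C : NNReal, LipschitzOnWith C Φ K := by
  by_contra h
  push_neg at h
  have H : ∀ n : ℕ, ∃ x ∈ K, ∃ y ∈ K, (n : ℝ) * dist x y < dist (Φ x) (Φ y) := by
    intro n
    have hn := h n
    rw [lipschitzOnWith_iff_dist_le_mul] at hn
    push_neg at hn
    obtain ⟨x, hx, y, hy, hxy⟩ := hn
    exact ⟨x, hx, y, hy, by exact_mod_cast hxy⟩
  choose x hx y hy hxy using H
  obtain ⟨a, haK, φ, hφ, hxa⟩ := hK.tendsto_subseq hx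
  obtain ⟨b, hbK, ψ, hψ, hyb⟩ := hK.tendsto_subseq (fun n => hy (φ n))
  have hxa' : Tendsto (fun n => x (φ (ψ n))) atTop (𝓝 a) := hxa.comp hψ.tendsto_atTop
  -- boundedness of Φ on K
  have hΦc : ContinuousOn Φ K := hΦ.continuous.continuousOn
  have hKim : IsCompact (Φ '' K) := hK.image_of_continuousOn hΦc
  obtain ⟨D, hD⟩ := hKim.isBounded.subset_ball 0
  have hdistΦ : ∀ u ∈ K, ∀ v ∈ K, dist (Φ u) (Φ v) ≤ 2 * D := by
    intro u hu v hv
    have h1 : dist (Φ u) 0 < D := by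
      have := hD (mem_image_of_mem Φ hu); simpa [Metric.mem_ball] using this
    have h2 : dist (Φ v) 0 < D := by
      have := hD (mem_image_of_mem Φ hv); simpa [Metric.mem_ball] using this
    calc dist (Φ u) (Φ v) ≤ dist (Φ u) 0 + dist 0 (Φ v) := dist_triangle _ _ _
    _ ≤ 2 * D := by rw [dist_comm 0]; linarith
  -- dist (x n) (y n) → 0
  have hd0 : Tendsto (fun n => dist (x n) (y n)) atTop (𝓝 0) := by
    have hle : ∀ n : ℕ, 1 ≤ n → dist (x n) (y n) ≤ 2 * D / n := by
      intro n hn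
      have h1 : (n : ℝ) * dist (x n) (y n) < 2 * D :=
        lt_of_lt_of_le (hxy n) (hdistΦ _ (hx n) _ (hy n))
      have hnpos : (0:ℝ) < n := by exact_mod_cast hn
      rw [div_eq_inv_mul, ← mul_le_mul_iff_right₀ hnpos, mul_inv_cancel_left₀ hnpos.ne']
      exact h1.le
    have h2 : Tendsto (fun n : ℕ => 2 * D / n) atTop (𝓝 0) :=
      tendsto_const_div_atTop_nhds_zero_nat (2 * D)
    refine squeeze_zero' ?_ (eventually_atTop.2 ⟨1, hle⟩) h2
    exact Eventually.of_forall fun n => dist_nonneg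
  have hd0' : Tendsto (fun n => dist (x (φ (ψ n))) (y (φ (ψ n)))) atTop (𝓝 0) :=
    hd0.comp ((hφ.comp hψ)).tendsto_atTop
  have hab : a = b := by
    have : Tendsto (fun n => dist (x (φ (ψ n))) (y (φ (ψ n)))) atTop (𝓝 (dist a b)) :=
      (hxa'.dist hyb)
    have := tendsto_nhds_unique this hd0'
    exact dist_eq_zero.mp this
  subst hab
  obtain ⟨C, t, htmem, hlip⟩ := hΦ a
  have hxev : ∀ᶠ n in atTop, x (φ (ψ n)) ∈ t := hxa' htmem
  have hyev : ∀ᶠ n in atTop, y (φ (ψ n)) ∈ t := hyb htmem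
  have hnev : ∀ᶠ n : ℕ in atTop, (C : ℝ) < n := by
    refine eventually_atTop.2 ⟨⌈(C:ℝ)⌉₊ + 1, fun n hn => ?_⟩
    calc (C : ℝ) ≤ ⌈(C:ℝ)⌉₊ := Nat.le_ceil _
    _ < n := by exact_mod_cast hn
  obtain ⟨n, hxt, hyt, hCn⟩ := (hxev.and (hyev.and hnev)).exists
  set m := φ (ψ n) with hm
  have hmn : n ≤ m := (hφ.comp hψ).id_le n
  have hlip' : dist (Φ (x m)) (Φ (y m)) ≤ C * dist (x m) (y m) :=
    (lipschitzOnWith_iff_dist_le_mul.mp hlip) _ hxt _ hyt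
  have hgt : (m : ℝ) * dist (x m) (y m) < C * dist (x m) (y m) :=
    lt_of_lt_of_le (hxy m) hlip'
  have hdpos : 0 ≤ dist (x m) (y m) := dist_nonneg
  rcases eq_or_lt_of_le hdpos with he | hlt
  · rw [← he] at hgt; simp at hgt
  · have h1 : (m : ℝ) < C := lt_of_mul_lt_mul_right hgt hdpos
    have h2 : (C : ℝ) < m := lt_of_lt_of_le hCn (by exact_mod_cast hmn)
    linarith


/-- If `Π` solves `∇Π · H = Φ(Π)` with `Φ` locally Lipschitz, then
any two solutions of `f' = H(f)` on `[0,T]` whose coarse initial values agree have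
identical coarse trajectories: the coarse response is uniquely determined by the
coarse initial value. -/
theorem coarse_response_determined_by_coarse_initial_value
    {N : ℕ}
    (H : (Fin N → ℝ) → (Fin N → ℝ)) (hH : Continuous H)
    (Piv : (Fin N → ℝ) → ℝ) (hPiv : Differentiable ℝ Piv)
    (Φ : ℝ → ℝ) (hΦ : LocallyLipschitz Φ)
    (hPDE : ∀ f : Fin N → ℝ, fderiv ℝ Piv f (H f) = Φ (Piv f))
    (T : ℝ) (hT : 0 < T)
    (f₁ f₂ : ℝ → Fin N → ℝ)
    (hf₁ : ∀ t ∈ Set.Icc (0 : ℝ) T, HasDerivAt f₁ (H (f₁ t)) t)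
    (hf₂ : ∀ t ∈ Set.Icc (0 : ℝ) T, HasDerivAt f₂ (H (f₂ t)) t)
    (h0 : Piv (f₁ 0) = Piv (f₂ 0)) :
    ∀ t ∈ Set.Icc (0 : ℝ) T, Piv (f₁ t) = Piv (f₂ t) := by
  set c₁ : ℝ → ℝ := fun t => Piv (f₁ t) with hc₁
  set c₂ : ℝ → ℝ := fun t => Piv (f₂ t) with hc₂
  have hd₁ : ∀ t ∈ Set.Icc (0:ℝ) T, HasDerivAt c₁ (Φ (c₁ t)) t := by
    intro t ht
    have := (hPiv (f₁ t)).hasFDerivAt.comp_hasDerivAt t (hf₁ t ht)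
    exact (by simpa [hPDE (f₁ t)] using this : HasDerivAt (Piv ∘ f₁) (Φ (Piv (f₁ t))) t)
  have hd₂ : ∀ t ∈ Set.Icc (0:ℝ) T, HasDerivAt c₂ (Φ (c₂ t)) t := by
    intro t ht
    have := (hPiv (f₂ t)).hasFDerivAt.comp_hasDerivAt t (hf₂ t ht)
    exact (by simpa [hPDE (f₂ t)] using this : HasDerivAt (Piv ∘ f₂) (Φ (Piv (f₂ t))) t)
  have hcont₁ : ContinuousOn c₁ (Set.Icc 0 T) :=
    fun t ht => ((hd₁ t ht).continuousAt).continuousWithinAt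
  have hcont₂ : ContinuousOn c₂ (Set.Icc 0 T) :=
    fun t ht => ((hd₂ t ht).continuousAt).continuousWithinAt
  set K : Set ℝ := c₁ '' Set.Icc 0 T ∪ c₂ '' Set.Icc 0 T with hK
  have hKcomp : IsCompact K :=
    ((isCompact_Icc.image_of_continuousOn hcont₁).union
      (isCompact_Icc.image_of_continuousOn hcont₂))
  obtain ⟨C, hC⟩ := myLocallyLipschitz.exists_lipschitzOnWith_of_isCompact hΦ hKcomp
  have key : Set.EqOn c₁ c₂ (Set.Icc 0 T) := by
    apply ODE_solution_unique_of_mem_Icc_right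
      (v := fun _ x => Φ x) (s := fun _ => K) (K := C)
      (fun _ _ => hC) hcont₁
      (fun t ht => ((hd₁ t (Set.Ico_subset_Icc_self ht)).hasDerivWithinAt))
      (fun t ht => Or.inl (Set.mem_image_of_mem c₁ (Set.Ico_subset_Icc_self ht)))
      hcont₂
      (fun t ht => ((hd₂ t (Set.Ico_subset_Icc_self ht)).hasDerivWithinAt))
      (fun t ht => Or.inr (Set.mem_image_of_mem c₂ (Set.Ico_subset_Icc_self ht)))
      h0
  exact fun t ht => key ht
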